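/- Let p_a ∈ (0,1) and N ≥ 1 be a fixed natural number. For p_c ∈ ℝ define q(p_c) = p_a·p_c + (1−p_a)·(1−p_c) and P_final(p_c) = (p_a·p_c/q(p_c))·(1 − (1−q(p_c))^N) + p_a·(1−q(p_c))^N. Then P_final is strictly increasing in p_c on the interval (1/2, 1]; that is, for all p_c, p_c' with 1/2 < p_c < p_c' ≤ 1, P_final(p_c) < P_final(p_c'). -/

import Mathlib

lemma geom_bound_aux (r : ℝ) (h0 : 0 ≤ r) (h1 : r ≤ 1) :
    ∀ n : ℕ, ((n : ℝ) + 1) * (1 - r) * r ^ n ≤ 1 - r ^ (n + 1) := by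
  intro n
  induction n with
  | zero => simp
  | succ n ih =>
    have hp : r ^ (n + 1) ≤ 1 := pow_le_one₀ h0 h1
    have e1 : r ^ (n + 1) = r * r ^ n := by ring
    have e2 : r ^ (n + 1 + 1) = r * r ^ (n + 1) := by ring
    have key' : ((n : ℝ) + 1) * (1 - r) * r ^ (n + 1) ≤ r * (1 - r ^ (n + 1)) := by
      calc ((n : ℝ) + 1) * (1 - r) * r ^ (n + 1) = r * (((n : ℝ) + 1) * (1 - r) * r ^ n) := by
            rw [e1]; ring
        _ ≤ r * (1 - r ^ (n + 1)) := mul_le_mul_of_nonneg_left ih h0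
    have h2 : (1 - r) * r ^ (n + 1) ≤ 1 - r := by nlinarith
    push_cast
    rw [e2]
    nlinarith [key', h2]

theorem stmt_2 (p_a : ℝ) (hpa : p_a ∈ Set.Ioo (0 : ℝ) 1) (N : ℕ) (hN : 1 ≤ N) :
    ∀ p_c p_c' : ℝ, 1 / 2 < p_c → p_c < p_c' → p_c' ≤ 1 →
      (p_a * p_c / (p_a * p_c + (1 - p_a) * (1 - p_c))) *
          (1 - (1 - (p_a * p_c + (1 - p_a) * (1 - p_c))) ^ N) +
        p_a * (1 - (p_a * p_c + (1 - p_a) * (1 - p_c))) ^ N <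
      (p_a * p_c' / (p_a * p_c' + (1 - p_a) * (1 - p_c'))) *
          (1 - (1 - (p_a * p_c' + (1 - p_a) * (1 - p_c'))) ^ N) +
        p_a * (1 - (p_a * p_c' + (1 - p_a) * (1 - p_c'))) ^ N := by
  obtain ⟨ha0, ha1⟩ := hpa
  intro c c' hc hcc' hc1
  -- the function under study
  set F : ℝ → ℝ := fun x =>
    (p_a * x / (p_a * x + (1 - p_a) * (1 - x))) *
        (1 - (1 - (p_a * x + (1 - p_a) * (1 - x))) ^ N) +
      p_a * (1 - (p_a * x + (1 - p_a) * (1 - x))) ^ N with hFdef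
  have hQpos : ∀ x : ℝ, 1 / 2 < x → x ≤ 1 → 0 < p_a * x + (1 - p_a) * (1 - x) := by
    intro x hx hx1
    nlinarith
  -- derivative
  have hderiv : ∀ x : ℝ, p_a * x + (1 - p_a) * (1 - x) ≠ 0 →
      HasDerivAt F
        (p_a * (1 - p_a) / (p_a * x + (1 - p_a) * (1 - x)) ^ 2 *
          ((1 - (1 - (p_a * x + (1 - p_a) * (1 - x))) ^ N) +
            (2 * p_a - 1) * (2 * x - 1) * N * (p_a * x + (1 - p_a) * (1 - x)) *
              (1 - (p_a * x + (1 - p_a) * (1 - x))) ^ (N - 1))) x := by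
    intro x hQ
    have hnum : HasDerivAt (fun y : ℝ => p_a * y) p_a x := by
      simpa using (hasDerivAt_id x).const_mul p_a
    have h2 : HasDerivAt (fun y : ℝ => (1 - p_a) * (1 - y)) (-(1 - p_a)) x := by
      simpa using ((hasDerivAt_const x (1 : ℝ)).sub (hasDerivAt_id x)).const_mul (1 - p_a)
    have hq : HasDerivAt (fun y : ℝ => p_a * y + (1 - p_a) * (1 - y)) (2 * p_a - 1) x := by
      have := hnum.add h2
      refine this.congr_deriv ?_
      ring
    have hr : HasDerivAt (fun y : ℝ => (1 - (p_a * y + (1 - p_a) * (1 - y))) ^ N)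
        ((N : ℝ) * (1 - (p_a * x + (1 - p_a) * (1 - x))) ^ (N - 1) * (0 - (2 * p_a - 1))) x :=
      ((hasDerivAt_const x (1 : ℝ)).sub hq).pow N
    have hdiv := hnum.div hq hQ
    have h1mr := (hasDerivAt_const x (1 : ℝ)).sub hr
    have hmul := hdiv.mul h1mr
    have hlast := hr.const_mul p_a
    have hd := hmul.add hlast
    refine hd.congr_deriv ?_
    simp only [Pi.div_apply, Pi.sub_apply]
    field_simp
    ring
  have hcont : ContinuousOn F (Set.Ioc (1 / 2 : ℝ) 1) := fun x hx =>
    ((hderiv x (hQpos x hx.1 hx.2).ne').continuousAt).continuousWithinAt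
  have hmono : StrictMonoOn F (Set.Ioc (1 / 2 : ℝ) 1) := by
    apply strictMonoOn_of_deriv_pos (convex_Ioc _ _) hcont
    intro x hx
    rw [interior_Ioc] at hx
    obtain ⟨hx1, hx2⟩ := hx
    have hQ := hQpos x hx1 hx2.le
    rw [(hderiv x hQ.ne').deriv]
    set q : ℝ := p_a * x + (1 - p_a) * (1 - x) with hqdef
    have hr0 : 0 < 1 - q := by rw [hqdef]; nlinarith
    have hr1 : 1 - q < 1 := by linarith
    have hkey := geom_bound_aux (1 - q) hr0.le hr1.le (N - 1)
    have hN1 : N - 1 + 1 = N := Nat.succ_pred_eq_of_pos hN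
    have hNc : ((N - 1 : ℕ) : ℝ) + 1 = (N : ℝ) := by
      push_cast [Nat.cast_sub hN]
      ring
    rw [hN1, hNc] at hkey
    -- hkey : (N:ℝ) * (1 - (1 - q)) * (1 - q) ^ (N - 1) ≤ 1 - (1 - q) ^ N
    have hkey' : (N : ℝ) * q * (1 - q) ^ (N - 1) ≤ 1 - (1 - q) ^ N := by
      have : (1 : ℝ) - (1 - q) = q := by ring
      rw [this] at hkey
      exact hkey
    have ht : -1 < (2 * p_a - 1) * (2 * x - 1) := by nlinarith
    have hNpos : (0 : ℝ) < (N : ℝ) := by exact_mod_cast hN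
    have hM : 0 < (N : ℝ) * q * (1 - q) ^ (N - 1) := by positivity
    have hG : 0 < (1 - (1 - q) ^ N) +
        (2 * p_a - 1) * (2 * x - 1) * N * q * (1 - q) ^ (N - 1) := by
      have h1t : 0 < (1 + (2 * p_a - 1) * (2 * x - 1)) * ((N : ℝ) * q * (1 - q) ^ (N - 1)) :=
        mul_pos (by linarith) hM
      nlinarith [hkey', h1t]
    have hfac : 0 < p_a * (1 - p_a) / q ^ 2 :=
      div_pos (mul_pos ha0 (by linarith)) (pow_pos hQ 2)
    exact mul_pos hfac hG
  exact hmono ⟨hc, le_of_lt (lt_of_lt_of_le hcc' hc1)⟩ ⟨lt_trans hc hcc', hc1⟩ hcc'
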